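/- For the symmetric two-population SIS model, define λ∥(y) = τ(d₁+d₂) − γ + 2(βh₁ − τ(d₁+d₂))y − 3βh₁y² and λ⊥(y) = τ(d₁−d₂) − γ + 2(βh₁ − τd₁)y − 3βh₁y². Then λ∥(y) − λ⊥(y) = 2τd₂(1−y) for all y. Consequently, if τd₂ ≥ 0 then λ⊥(y) ≤ λ∥(y) for all y ∈ [0,1]; and if τd₂ > 0, y ∈ [0,1) and λ⊥(y) = 0, then λ∥(y) > 0, so any symmetric equilibrium at which the transverse eigenvalue vanishes (a pitchfork point) is linearly unstable (any pitchfork bifurcation of the symmetric branch is subcritical). -/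
import Mathlib


/-- For the symmetric two-population SIS model, the parallel and
transverse eigenvalues `λ∥(y) = τ(d₁+d₂) − γ + 2(βh₁ − τ(d₁+d₂))y − 3βh₁y²` and
`λ⊥(y) = τ(d₁−d₂) − γ + 2(βh₁ − τd₁)y − 3βh₁y²` satisfy
`λ∥(y) − λ⊥(y) = 2τd₂(1−y)`. Hence if `τd₂ ≥ 0` then `λ⊥ ≤ λ∥` on `[0,1]`, and if
`τd₂ > 0` then any `y ∈ [0,1)` with `λ⊥(y) = 0` has `λ∥(y) > 0`: any pitchfork point
on the symmetric branch is linearly unstable (subcritical symmetry breaking). -/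
theorem symmetric_eigenvalue_comparison (τ β γ d₁ d₂ h₁ : ℝ)
    (lamPar lamPerp : ℝ → ℝ)
    (hPar : ∀ y : ℝ, lamPar y =
      τ * (d₁ + d₂) - γ + 2 * (β * h₁ - τ * (d₁ + d₂)) * y - 3 * β * h₁ * y ^ 2)
    (hPerp : ∀ y : ℝ, lamPerp y =
      τ * (d₁ - d₂) - γ + 2 * (β * h₁ - τ * d₁) * y - 3 * β * h₁ * y ^ 2) :
    (∀ y : ℝ, lamPar y - lamPerp y = 2 * τ * d₂ * (1 - y)) ∧
    (0 ≤ τ * d₂ → ∀ y ∈ Set.Icc (0 : ℝ) 1, lamPerp y ≤ lamPar y) ∧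
    (0 < τ * d₂ → ∀ y ∈ Set.Ico (0 : ℝ) 1, lamPerp y = 0 → 0 < lamPar y) := by
  have key : ∀ y : ℝ, lamPar y - lamPerp y = 2 * τ * d₂ * (1 - y) := by
    intro y; rw [hPar, hPerp]; ring
  refine ⟨key, ?_, ?_⟩
  · intro h y hy
    have := key y
    nlinarith [hy.1, hy.2]
  · intro h y hy h0
    have := key y
    nlinarith [hy.1, hy.2]
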